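/- arXiv:2103.06834 — 5 statements merged into one kernel-verified Lean document; each statement's English description precedes it below -/
import Mathlib

section
/- For all f, g ∈ L²(ℝ²), the double integral ∫_{ℝ²}∫_{ℝ²} |f(x)| |g(x')| / (|x|² + |x'|²) dx dx' is at most π² ‖f‖_{L²} ‖g‖_{L²}. -/
open MeasureTheory Real Set Metric Filter Topology
open scoped ENNReal

noncomputable section

local notation "E2" => EuclideanSpace ℝ (Fin 2)

lemma aux_polar (F : ℝ → ℝ≥0∞) (hF : Measurable F) :
    ∫⁻ x : E2, F ‖x‖ = ENNReal.ofReal (2 * π) * ∫⁻ s in Ioi (0:ℝ), ENNReal.ofReal s * F s := by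
  have hdim : Module.finrank ℝ E2 = 2 := by simp [finrank_euclideanSpace]
  have h1 : ∫⁻ x : E2, F ‖x‖
      = ∫⁻ x : ({(0:E2)}ᶜ : Set E2), F ‖(x:E2)‖ ∂((volume : Measure E2).comap Subtype.val) := by
    rw [lintegral_subtype_comap (measurableSet_singleton (0:E2)).compl (fun x : E2 => F ‖x‖),
      MeasureTheory.restrict_compl_singleton]
  have h2 := (Measure.measurePreserving_homeomorphUnitSphereProd
      (volume : Measure E2)).lintegral_comp (f := fun p : sphere (0:E2) 1 × Ioi (0:ℝ) => F p.2.1)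
      (hF.comp (measurable_subtype_coe.comp measurable_snd))
  simp only [homeomorphUnitSphereProd_apply_snd_coe] at h2
  rw [h1, h2]
  rw [lintegral_prod (f := fun b : sphere (0:E2) 1 × Ioi (0:ℝ) => F b.2.1)
    (((hF.comp measurable_subtype_coe).comp measurable_snd).aemeasurable)]
  simp only [lintegral_const]
  rw [hdim]
  have hIoiPow : ∫⁻ (y : ↥(Ioi (0:ℝ))), F ↑y ∂(Measure.volumeIoiPow (2 - 1))
      = ∫⁻ s in Ioi (0:ℝ), ENNReal.ofReal s * F s := by
    rw [Measure.volumeIoiPow, lintegral_withDensity_eq_lintegral_mul _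
      (f := fun r : Ioi (0:ℝ) => ENNReal.ofReal (r.1 ^ (2-1)))
      ((measurable_subtype_coe.pow_const _).ennreal_ofReal)
      (g := fun y : Ioi (0:ℝ) => F y.1) (hF.comp measurable_subtype_coe)]
    simp only [Pi.mul_apply]
    rw [lintegral_subtype_comap measurableSet_Ioi
      (fun s : ℝ => ENNReal.ofReal (s ^ (2-1)) * F s)]
    simp [pow_one]
  have hsph : (volume : Measure E2).toSphere univ = ENNReal.ofReal (2 * π) := by
    rw [Measure.toSphere_apply_univ, hdim]
    have hb : volume (ball (0:E2) 1) = ENNReal.ofReal π := by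
      rw [EuclideanSpace.volume_ball]
      norm_num [Real.Gamma_two, Real.sq_sqrt pi_nonneg]
    rw [hb, ENNReal.ofReal_mul (by norm_num : (0:ℝ) ≤ 2)]
    norm_num
  rw [hIoiPow, hsph, mul_comm]

lemma aux_deriv {r : ℝ} (hr : 0 < r) :
    ∀ s ∈ Ioi (0:ℝ), HasDerivAt (fun t : ℝ => arctan (t / r)) (r / (r^2 + s^2)) s := by
  intro s _
  have h := (Real.hasDerivAt_arctan (s / r)).comp s ((hasDerivAt_id s).div_const r)
  refine h.congr_deriv ?_
  field_simp

lemma aux_tendsto {r : ℝ} (hr : 0 < r) :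
    Tendsto (fun t : ℝ => arctan (t / r)) atTop (𝓝 (π / 2)) := by
  exact (tendsto_nhds_of_tendsto_nhdsWithin Real.tendsto_arctan_atTop).comp
    (tendsto_id.atTop_div_const hr)

lemma aux_cont {r : ℝ} (hr : 0 < r) :
    ContinuousWithinAt (fun t : ℝ => arctan (t / r)) (Ici (0:ℝ)) 0 :=
  (Real.continuous_arctan.comp (continuous_id.div_const r)).continuousWithinAt

lemma aux_nonneg {r : ℝ} (hr : 0 < r) : ∀ s ∈ Ioi (0:ℝ), 0 ≤ r / (r^2 + s^2) := by
  intro s _; positivity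

lemma aux_oneD_int {r : ℝ} (hr : 0 < r) :
    IntegrableOn (fun s : ℝ => r / (r^2 + s^2)) (Ioi (0:ℝ)) :=
  integrableOn_Ioi_deriv_of_nonneg (aux_cont hr) (aux_deriv hr) (aux_nonneg hr) (aux_tendsto hr)

lemma aux_oneD {r : ℝ} (hr : 0 < r) :
    ∫ s in Ioi (0:ℝ), r / (r^2 + s^2) = π / 2 := by
  have := integral_Ioi_of_hasDerivAt_of_nonneg (aux_cont hr) (aux_deriv hr)
    (aux_nonneg hr) (aux_tendsto hr)
  simpa using this

lemma aux_key {r : ℝ} (hr : 0 < r) :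
    ∫⁻ y : E2, ENNReal.ofReal (r / (‖y‖ * (r^2 + ‖y‖^2))) = ENNReal.ofReal (π^2) := by
  have hF : Measurable (fun t : ℝ => ENNReal.ofReal (r / (t * (r^2 + t^2)))) := by
    fun_prop
  rw [aux_polar _ hF]
  have hcg : ∀ s ∈ Ioi (0:ℝ), ENNReal.ofReal s * ENNReal.ofReal (r / (s * (r^2 + s^2)))
      = ENNReal.ofReal (r / (r^2 + s^2)) := by
    intro s hs
    rw [← ENNReal.ofReal_mul hs.out.le]
    congr 1
    have h1 : s ≠ 0 := ne_of_gt hs.out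
    have h2 : r^2 + s^2 ≠ 0 := by positivity
    field_simp
  rw [setLIntegral_congr_fun measurableSet_Ioi hcg,
    ← ofReal_integral_eq_lintegral_ofReal (aux_oneD_int hr)
      (ae_of_all _ fun s => by positivity),
    aux_oneD hr, ← ENNReal.ofReal_mul (by positivity)]
  ring_nf

lemma aux_main (f g : EuclideanSpace ℝ (Fin 2) → ℝ)
    (hf : Measurable f) (hg : Measurable g) :
    ∫⁻ x, ∫⁻ x', ENNReal.ofReal (|f x| * |g x'| / (‖x‖ ^ 2 + ‖x'‖ ^ 2)) ≤
      ENNReal.ofReal (π ^ 2) * eLpNorm f 2 volume * eLpNorm g 2 volume := by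
  set μ2 : Measure (E2 × E2) := (volume : Measure E2).prod volume with hμ2
  set K : E2 × E2 → ℝ≥0∞ :=
    fun p => ENNReal.ofReal (|f p.1| * |g p.2| / (‖p.1‖ ^ 2 + ‖p.2‖ ^ 2)) with hK
  set A : E2 × E2 → ℝ≥0∞ :=
    fun p => ENNReal.ofReal
      (Real.sqrt (|f p.1| ^ 2 * (‖p.1‖ / ‖p.2‖) / (‖p.1‖ ^ 2 + ‖p.2‖ ^ 2))) with hA
  set B : E2 × E2 → ℝ≥0∞ :=
    fun p => ENNReal.ofReal
      (Real.sqrt (|g p.2| ^ 2 * (‖p.2‖ / ‖p.1‖) / (‖p.1‖ ^ 2 + ‖p.2‖ ^ 2))) with hB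
  have hKm : Measurable K := by
    apply Measurable.ennreal_ofReal
    exact (((hf.comp measurable_fst).abs.mul (hg.comp measurable_snd).abs).div
      (((measurable_fst.norm).pow_const 2).add ((measurable_snd.norm).pow_const 2)))
  have hAm : Measurable A := by
    apply Measurable.ennreal_ofReal
    apply Measurable.sqrt
    exact (((hf.comp measurable_fst).abs.pow_const 2).mul
      ((measurable_fst.norm).div (measurable_snd.norm))).div
      (((measurable_fst.norm).pow_const 2).add ((measurable_snd.norm).pow_const 2))
  have hBm : Measurable B := by
    apply Measurable.ennreal_ofReal
    apply Measurable.sqrt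
    exact (((hg.comp measurable_snd).abs.pow_const 2).mul
      ((measurable_snd.norm).div (measurable_fst.norm))).div
      (((measurable_fst.norm).pow_const 2).add ((measurable_snd.norm).pow_const 2))
  -- a.e. both coordinates nonzero
  have hae : ∀ᵐ p ∂μ2, p.1 ≠ (0:E2) ∧ p.2 ≠ (0:E2) := by
    have h1 : μ2 {p : E2 × E2 | p.1 = 0} = 0 := by
      have he : {p : E2 × E2 | p.1 = 0} = ({0} : Set E2) ×ˢ (univ : Set E2) := by
        ext ⟨a, b⟩; simp [eq_comm]
      rw [hμ2, he, Measure.prod_prod, measure_singleton, zero_mul]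
    have h2 : μ2 {p : E2 × E2 | p.2 = 0} = 0 := by
      have he : {p : E2 × E2 | p.2 = 0} = (univ : Set E2) ×ˢ ({0} : Set E2) := by
        ext ⟨a, b⟩; simp [eq_comm]
      rw [hμ2, he, Measure.prod_prod, measure_singleton, mul_zero]
    have e1 : ∀ᵐ p ∂μ2, p.1 ≠ (0:E2) := by
      rw [ae_iff]; simpa using h1
    have e2 : ∀ᵐ p ∂μ2, p.2 ≠ (0:E2) := by
      rw [ae_iff]; simpa using h2
    exact e1.and e2
  -- pointwise a.e. bound K ≤ A * B
  have hKAB : ∀ᵐ p ∂μ2, K p ≤ A p * B p := by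
    filter_upwards [hae] with p hp
    obtain ⟨h1, h2⟩ := hp
    have hr : 0 < ‖p.1‖ := norm_pos_iff.mpr h1
    have hs : 0 < ‖p.2‖ := norm_pos_iff.mpr h2
    have hd : (0:ℝ) < ‖p.1‖ ^ 2 + ‖p.2‖ ^ 2 := by positivity
    refine le_of_eq ?_
    rw [hK, hA, hB]
    rw [← ENNReal.ofReal_mul (Real.sqrt_nonneg _), ← Real.sqrt_mul (by positivity)]
    have heq : (|f p.1| ^ 2 * (‖p.1‖ / ‖p.2‖) / (‖p.1‖ ^ 2 + ‖p.2‖ ^ 2)) *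
        (|g p.2| ^ 2 * (‖p.2‖ / ‖p.1‖) / (‖p.1‖ ^ 2 + ‖p.2‖ ^ 2)) =
        (|f p.1| * |g p.2| / (‖p.1‖ ^ 2 + ‖p.2‖ ^ 2)) ^ 2 := by
      field_simp
    rw [heq, Real.sqrt_sq (by positivity)]
  -- squares of A and B
  have hA2 : ∀ p : E2 × E2, A p ^ (2:ℝ) =
      ENNReal.ofReal (|f p.1| ^ 2 * (‖p.1‖ / ‖p.2‖) / (‖p.1‖ ^ 2 + ‖p.2‖ ^ 2)) := by
    intro p
    have ht : (0:ℝ) ≤ |f p.1| ^ 2 * (‖p.1‖ / ‖p.2‖) / (‖p.1‖ ^ 2 + ‖p.2‖ ^ 2) := by positivity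
    rw [hA, ENNReal.ofReal_rpow_of_nonneg (Real.sqrt_nonneg _) (by norm_num)]
    congr 1
    rw [show (2:ℝ) = ((2:ℕ):ℝ) by norm_num, Real.rpow_natCast, Real.sq_sqrt ht]
  have hB2 : ∀ p : E2 × E2, B p ^ (2:ℝ) =
      ENNReal.ofReal (|g p.2| ^ 2 * (‖p.2‖ / ‖p.1‖) / (‖p.1‖ ^ 2 + ‖p.2‖ ^ 2)) := by
    intro p
    have ht : (0:ℝ) ≤ |g p.2| ^ 2 * (‖p.2‖ / ‖p.1‖) / (‖p.1‖ ^ 2 + ‖p.2‖ ^ 2) := by positivity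
    rw [hB, ENNReal.ofReal_rpow_of_nonneg (Real.sqrt_nonneg _) (by norm_num)]
    congr 1
    rw [show (2:ℝ) = ((2:ℕ):ℝ) by norm_num, Real.rpow_natCast, Real.sq_sqrt ht]
  have h0ae : ∀ᵐ x ∂(volume : Measure E2), x ≠ 0 := by
    rw [ae_iff]
    simpa using measure_singleton (0:E2)
  -- value of ∫ A²
  have IA : ∫⁻ p, A p ^ (2:ℝ) ∂μ2 =
      ENNReal.ofReal (π ^ 2) * ∫⁻ x, ENNReal.ofReal (|f x| ^ 2) := by
    simp only [hA2]
    rw [hμ2, lintegral_prod _ (by exact (Measurable.ennreal_ofReal (by fun_prop)).aemeasurable)]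
    rw [lintegral_congr_ae (g := fun x => ENNReal.ofReal (|f x| ^ 2) * ENNReal.ofReal (π ^ 2)) ?_]
    · rw [lintegral_mul_const _ (by fun_prop), mul_comm]
    · filter_upwards [h0ae] with x hx
      have hr : 0 < ‖x‖ := norm_pos_iff.mpr hx
      have hpt : ∀ y : E2, ENNReal.ofReal (|f x| ^ 2 * (‖x‖ / ‖y‖) / (‖x‖ ^ 2 + ‖y‖ ^ 2)) =
          ENNReal.ofReal (|f x| ^ 2) * ENNReal.ofReal (‖x‖ / (‖y‖ * (‖x‖ ^ 2 + ‖y‖ ^ 2))) := by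
        intro y
        rw [← ENNReal.ofReal_mul (by positivity)]
        congr 1
        rw [mul_div_assoc, div_div]
      simp only [hpt]
      rw [lintegral_const_mul _ (by fun_prop), aux_key hr]
  -- value of ∫ B²
  have IB : ∫⁻ p, B p ^ (2:ℝ) ∂μ2 =
      ENNReal.ofReal (π ^ 2) * ∫⁻ y, ENNReal.ofReal (|g y| ^ 2) := by
    simp only [hB2]
    rw [hμ2, lintegral_prod_symm _ (by exact (Measurable.ennreal_ofReal (by fun_prop)).aemeasurable)]
    rw [lintegral_congr_ae (g := fun y => ENNReal.ofReal (|g y| ^ 2) * ENNReal.ofReal (π ^ 2)) ?_]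
    · rw [lintegral_mul_const _ (by fun_prop), mul_comm]
    · filter_upwards [h0ae] with y hy
      have hs : 0 < ‖y‖ := norm_pos_iff.mpr hy
      have hpt : ∀ x : E2, ENNReal.ofReal (|g y| ^ 2 * (‖y‖ / ‖x‖) / (‖x‖ ^ 2 + ‖y‖ ^ 2)) =
          ENNReal.ofReal (|g y| ^ 2) * ENNReal.ofReal (‖y‖ / (‖x‖ * (‖y‖ ^ 2 + ‖x‖ ^ 2))) := by
        intro x
        rw [← ENNReal.ofReal_mul (by positivity)]
        congr 1
        rw [mul_div_assoc, div_div, add_comm (‖x‖ ^ 2) (‖y‖ ^ 2)]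
      simp only [hpt]
      rw [lintegral_const_mul _ (by fun_prop), aux_key hs]
  -- eLpNorm identities
  have hNf : eLpNorm f 2 volume = (∫⁻ x, ENNReal.ofReal (|f x| ^ 2)) ^ (1/2:ℝ) := by
    rw [eLpNorm_eq_lintegral_rpow_enorm_toReal (by norm_num) (by norm_num)]
    simp only [ENNReal.toReal_ofNat]
    congr 1
    refine lintegral_congr fun x => ?_
    rw [show ‖f x‖ₑ = ENNReal.ofReal |f x| by
        rw [← Real.norm_eq_abs, ofReal_norm_eq_enorm],
      ENNReal.ofReal_rpow_of_nonneg (abs_nonneg _) (by norm_num)]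
    congr 1
    rw [show (2:ℝ) = ((2:ℕ):ℝ) by norm_num, Real.rpow_natCast]
  have hNg : eLpNorm g 2 volume = (∫⁻ y, ENNReal.ofReal (|g y| ^ 2)) ^ (1/2:ℝ) := by
    rw [eLpNorm_eq_lintegral_rpow_enorm_toReal (by norm_num) (by norm_num)]
    simp only [ENNReal.toReal_ofNat]
    congr 1
    refine lintegral_congr fun y => ?_
    rw [show ‖g y‖ₑ = ENNReal.ofReal |g y| by
        rw [← Real.norm_eq_abs, ofReal_norm_eq_enorm],
      ENNReal.ofReal_rpow_of_nonneg (abs_nonneg _) (by norm_num)]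
    congr 1
    rw [show (2:ℝ) = ((2:ℕ):ℝ) by norm_num, Real.rpow_natCast]
  -- main chain
  set X := ENNReal.ofReal (π ^ 2) with hX
  have hX0 : X ≠ 0 := by
    rw [hX]
    exact (ENNReal.ofReal_pos.mpr (by positivity)).ne'
  have hXtop : X ≠ ⊤ := ENNReal.ofReal_ne_top
  calc ∫⁻ x, ∫⁻ x', ENNReal.ofReal (|f x| * |g x'| / (‖x‖ ^ 2 + ‖x'‖ ^ 2))
      = ∫⁻ p, K p ∂μ2 := (lintegral_prod K hKm.aemeasurable).symm
    _ ≤ ∫⁻ p, A p * B p ∂μ2 := lintegral_mono_ae hKAB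
    _ ≤ (∫⁻ p, A p ^ (2:ℝ) ∂μ2) ^ (1/2:ℝ) * (∫⁻ p, B p ^ (2:ℝ) ∂μ2) ^ (1/2:ℝ) :=
        ENNReal.lintegral_mul_le_Lp_mul_Lq μ2 (Real.holderConjugate_iff.mpr ⟨one_lt_two, by norm_num⟩)
          hAm.aemeasurable hBm.aemeasurable
    _ = (X * ∫⁻ x, ENNReal.ofReal (|f x| ^ 2)) ^ (1/2:ℝ) *
        (X * ∫⁻ y, ENNReal.ofReal (|g y| ^ 2)) ^ (1/2:ℝ) := by rw [IA, IB]
    _ = X * eLpNorm f 2 volume * eLpNorm g 2 volume := by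
        rw [hNf, hNg, ENNReal.mul_rpow_of_nonneg _ _ (by norm_num : (0:ℝ) ≤ 1/2),
          ENNReal.mul_rpow_of_nonneg _ _ (by norm_num : (0:ℝ) ≤ 1/2)]
        rw [show X ^ (1/2:ℝ) * (∫⁻ x, ENNReal.ofReal (|f x| ^ 2)) ^ (1/2:ℝ) *
            (X ^ (1/2:ℝ) * (∫⁻ y, ENNReal.ofReal (|g y| ^ 2)) ^ (1/2:ℝ)) =
            (X ^ (1/2:ℝ) * X ^ (1/2:ℝ)) * (∫⁻ x, ENNReal.ofReal (|f x| ^ 2)) ^ (1/2:ℝ) *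
            (∫⁻ y, ENNReal.ofReal (|g y| ^ 2)) ^ (1/2:ℝ) by ring]
        rw [← ENNReal.rpow_add _ _ hX0 hXtop]
        norm_num

/-- Lemma 4.6: for all `f, g ∈ L²(ℝ²)`,
`∫∫ |f(x)| |g(x')| / (|x|² + |x'|²) dx dx' ≤ π² ‖f‖_{L²} ‖g‖_{L²}`. -/
theorem stmt0 (f g : EuclideanSpace ℝ (Fin 2) → ℝ)
    (hf : MemLp f 2 volume) (hg : MemLp g 2 volume) :
    ∫⁻ x, ∫⁻ x', ENNReal.ofReal (|f x| * |g x'| / (‖x‖ ^ 2 + ‖x'‖ ^ 2)) ≤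
      ENNReal.ofReal (π ^ 2) * eLpNorm f 2 volume * eLpNorm g 2 volume := by
  have hfa : AEMeasurable f volume := hf.1.aemeasurable
  have hga : AEMeasurable g volume := hg.1.aemeasurable
  set f₀ := hfa.mk f with hf₀
  set g₀ := hga.mk g with hg₀
  have hfe : f =ᵐ[volume] f₀ := hfa.ae_eq_mk
  have hge : g =ᵐ[volume] g₀ := hga.ae_eq_mk
  have hE1 : eLpNorm f 2 volume = eLpNorm f₀ 2 volume := eLpNorm_congr_ae hfe
  have hE2 : eLpNorm g 2 volume = eLpNorm g₀ 2 volume := eLpNorm_congr_ae hge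
  have hLHS : ∫⁻ x, ∫⁻ x', ENNReal.ofReal (|f x| * |g x'| / (‖x‖ ^ 2 + ‖x'‖ ^ 2)) =
      ∫⁻ x, ∫⁻ x', ENNReal.ofReal (|f₀ x| * |g₀ x'| / (‖x‖ ^ 2 + ‖x'‖ ^ 2)) := by
    apply lintegral_congr_ae
    filter_upwards [hfe] with x hx
    apply lintegral_congr_ae
    filter_upwards [hge] with y hy
    rw [hx, hy]
  rw [hLHS, hE1, hE2]
  exact aux_main f₀ g₀ hfa.measurable_mk hga.measurable_mk
end
end

section
/- For every x' ∈ ℝ² with x' ≠ 0, the integral ∫_{ℝ²} 1/((|x|² + |x'|²)·|x|) dx equals π²/|x'|. -/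
open MeasureTheory Real

lemma aux_radial (a : ℝ) (ha : 0 < a) :
    ∫ y in Set.Ioi (0:ℝ), y ^ 1 • (1 / ((y ^ 2 + a ^ 2) * y)) = π / (2 * a) := by
  have h1 : ∀ y ∈ Set.Ioi (0:ℝ),
      y ^ 1 • (1 / ((y ^ 2 + a ^ 2) * y)) = a⁻¹ * (a⁻¹ * ((1 + (a⁻¹ * y) ^ 2)⁻¹)) := by
    intro y hy
    have hy0 : y ≠ 0 := (ne_of_gt hy)
    have : (y:ℝ) ^ 2 + a ^ 2 > 0 := by positivity
    field_simp
    rw [smul_eq_mul, mul_one_div, div_mul_eq_mul_div, div_eq_one_iff_eq (mul_ne_zero hy0 this.ne')]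
    ring
  rw [setIntegral_congr_fun measurableSet_Ioi h1, integral_const_mul]
  have := integral_comp_mul_left_Ioi (fun y => a⁻¹ * ((1 + y ^ 2)⁻¹)) 0 (inv_pos.mpr ha)
  simp only [mul_zero] at this
  rw [this, smul_eq_mul, integral_const_mul, integral_Ioi_inv_one_add_sq]
  rw [inv_inv, arctan_zero, sub_zero]
  field_simp

/-- The Schur-test computation inside the proof of Lemma 4.6: for every `x' ≠ 0` in `ℝ²`,
`∫_{ℝ²} 1 / ((|x|² + |x'|²)·|x|) dx = π² / |x'|`. -/
theorem stmt1 (x' : EuclideanSpace ℝ (Fin 2)) (hx' : x' ≠ 0) :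
    ∫ x : EuclideanSpace ℝ (Fin 2), 1 / ((‖x‖ ^ 2 + ‖x'‖ ^ 2) * ‖x‖) = π ^ 2 / ‖x'‖ := by
  have ha : 0 < ‖x'‖ := norm_pos_iff.mpr hx'
  have hvol : (volume (Metric.ball (0 : EuclideanSpace ℝ (Fin 2)) 1)).toReal = π := by
    rw [EuclideanSpace.volume_ball]
    norm_num
    exact Real.sq_sqrt pi_pos.le
  have hdim : Module.finrank ℝ (EuclideanSpace ℝ (Fin 2)) = 2 := by
    simp [finrank_euclideanSpace]
  have key := MeasureTheory.integral_fun_norm_addHaar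
    (volume : Measure (EuclideanSpace ℝ (Fin 2)))
    (fun y : ℝ => 1 / ((y ^ 2 + ‖x'‖ ^ 2) * y))
  rw [hdim] at key
  rw [key, measureReal_def, hvol, aux_radial ‖x'‖ ha]
  simp only [nsmul_eq_mul, smul_eq_mul]
  field_simp
  ring
end

section
/- Let V ∈ L¹(ℝ²) ∩ L²(ℝ²) and suppose ∫_{ℝ²} |r|^{2s} |V(r)| dr < ∞ for some s > 0. Then ∫_{ℝ²}∫_{ℝ²} |V(r)| (ln |r − r'|)² |V(r')| dr dr' < ∞. -/
open MeasureTheory Real ENNReal Set Metric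

local notation "E2" => EuclideanSpace ℝ (Fin 2)

noncomputable abbrev Kfun (x : EuclideanSpace ℝ (Fin 2)) : ℝ :=
  if ‖x‖ ≤ 1 then 4 * ‖x‖⁻¹ else 0

lemma Kfun_nonneg (x : EuclideanSpace ℝ (Fin 2)) : 0 ≤ Kfun x := by
  unfold Kfun; split <;> positivity

lemma measurable_Kfun : Measurable Kfun := by
  apply Measurable.ite (measurableSet_le measurable_norm measurable_const)
  · exact measurable_norm.inv.const_mul 4
  · exact measurable_const

lemma lintegral_Kfun_lt_top :
    (∫⁻ x : EuclideanSpace ℝ (Fin 2), ENNReal.ofReal (Kfun x)) < ∞ := by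
  rw [lintegral_eq_lintegral_meas_le volume (Filter.Eventually.of_forall Kfun_nonneg)
    measurable_Kfun.aemeasurable]
  have hsub : ∀ t : ℝ, t ∈ Set.Ioi (0:ℝ) →
      volume {a : EuclideanSpace ℝ (Fin 2) | t ≤ Kfun a}
        ≤ volume (Metric.closedBall (0 : EuclideanSpace ℝ (Fin 2)) (min 1 (4/t))) := by
    intro t ht
    apply measure_mono
    intro a ha
    simp only [Set.mem_setOf_eq] at ha
    have ht0 : (0:ℝ) < t := ht
    rw [Metric.mem_closedBall, dist_zero_right]
    by_cases h : ‖a‖ ≤ 1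
    · rw [Kfun, if_pos h] at ha
      have h4 : t * ‖a‖ ≤ 4 := by
        calc t * ‖a‖ ≤ 4 * ‖a‖⁻¹ * ‖a‖ :=
              mul_le_mul_of_nonneg_right ha (norm_nonneg a)
          _ ≤ 4 := by
            rcases eq_or_ne ‖a‖ 0 with h0 | h0
            · simp [h0]
            · rw [mul_assoc, inv_mul_cancel₀ h0, mul_one]
      have h5 : ‖a‖ ≤ 4 / t := by rw [le_div_iff₀ ht0]; linarith
      exact le_min h h5
    · rw [Kfun, if_neg h] at ha; linarith
  calc (∫⁻ t in Set.Ioi (0:ℝ), volume {a : EuclideanSpace ℝ (Fin 2) | t ≤ Kfun a})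
      ≤ ∫⁻ t in Set.Ioi (0:ℝ),
          volume (Metric.closedBall (0 : EuclideanSpace ℝ (Fin 2)) (min 1 (4/t))) :=
        setLIntegral_mono' measurableSet_Ioi hsub
    _ ≤ ∫⁻ t in Set.Ioc (0:ℝ) 4 ∪ Set.Ioi 4,
          volume (Metric.closedBall (0 : EuclideanSpace ℝ (Fin 2)) (min 1 (4/t))) :=
        lintegral_mono_set Set.Ioi_subset_Ioc_union_Ioi
    _ ≤ (∫⁻ t in Set.Ioc (0:ℝ) 4,
          volume (Metric.closedBall (0 : EuclideanSpace ℝ (Fin 2)) (min 1 (4/t))))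
        + ∫⁻ t in Set.Ioi (4:ℝ),
          volume (Metric.closedBall (0 : EuclideanSpace ℝ (Fin 2)) (min 1 (4/t))) :=
        lintegral_union_le _ _ _
    _ < ∞ := by
        apply ENNReal.add_lt_top.2
        constructor
        · calc (∫⁻ t in Set.Ioc (0:ℝ) 4,
              volume (Metric.closedBall (0 : EuclideanSpace ℝ (Fin 2)) (min 1 (4/t))))
              ≤ ∫⁻ _t in Set.Ioc (0:ℝ) 4,
                volume (Metric.closedBall (0 : EuclideanSpace ℝ (Fin 2)) 1) :=
                lintegral_mono fun t => measure_mono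
                  (Metric.closedBall_subset_closedBall (min_le_left _ _))
            _ = volume (Metric.closedBall (0 : EuclideanSpace ℝ (Fin 2)) 1)
                  * volume (Set.Ioc (0:ℝ) 4) := setLIntegral_const _ _
            _ < ∞ := ENNReal.mul_lt_top measure_closedBall_lt_top (by
                rw [Real.volume_Ioc]; exact ENNReal.ofReal_lt_top)
        · have heq : ∀ t ∈ Set.Ioi (4:ℝ),
              volume (Metric.closedBall (0 : EuclideanSpace ℝ (Fin 2)) (min 1 (4/t)))
                ≤ ENNReal.ofReal (16 * t ^ (-2:ℝ))
                    * volume (Metric.ball (0 : EuclideanSpace ℝ (Fin 2)) 1) := by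
            intro t ht
            have ht4 : (4:ℝ) < t := ht
            have ht0 : (0:ℝ) < t := by linarith
            have hdiv : (0:ℝ) ≤ 4 / t := by positivity
            have hmin : min 1 (4/t) = 4/t := min_eq_right (by
              rw [div_le_one ht0]; linarith)
            rw [hmin, Measure.addHaar_closedBall _ _ hdiv]
            have : (4 / t) ^ Module.finrank ℝ (EuclideanSpace ℝ (Fin 2)) = 16 * t ^ (-2:ℝ) := by
              rw [finrank_euclideanSpace_fin]
              rw [Real.rpow_neg ht0.le, show (2:ℝ) = ((2:ℕ):ℝ) by norm_num,
                Real.rpow_natCast]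
              field_simp
              ring
            rw [this]
          calc (∫⁻ t in Set.Ioi (4:ℝ),
              volume (Metric.closedBall (0 : EuclideanSpace ℝ (Fin 2)) (min 1 (4/t))))
              ≤ ∫⁻ t in Set.Ioi (4:ℝ), ENNReal.ofReal (16 * t ^ (-2:ℝ))
                  * volume (Metric.ball (0 : EuclideanSpace ℝ (Fin 2)) 1) :=
                setLIntegral_mono' measurableSet_Ioi heq
            _ = (∫⁻ t in Set.Ioi (4:ℝ), ENNReal.ofReal (16 * t ^ (-2:ℝ)))
                  * volume (Metric.ball (0 : EuclideanSpace ℝ (Fin 2)) 1) :=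
                lintegral_mul_const' _ _ measure_ball_lt_top.ne
            _ < ∞ := by
                apply ENNReal.mul_lt_top _ measure_ball_lt_top
                have hint : IntegrableOn (fun t : ℝ => 16 * t ^ (-2:ℝ)) (Set.Ioi 4) := by
                  exact (integrableOn_Ioi_rpow_of_lt (by norm_num) (by norm_num)).const_mul 16
                exact hint.setLIntegral_lt_top

lemma add_rpow_le' {a b p : ℝ} (ha : 0 ≤ a) (hb : 0 ≤ b) (hp0 : 0 ≤ p) (hp1 : p ≤ 1) :
    (a + b) ^ p ≤ a ^ p + b ^ p := by
  have h := NNReal.rpow_add_le_add_rpow a.toNNReal b.toNNReal hp0 hp1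
  have h2 := NNReal.coe_le_coe.mpr h
  push_cast at h2
  rwa [Real.coe_toNNReal a ha, Real.coe_toNNReal b hb] at h2

lemma logsq_le_near {x : ℝ} (h0 : 0 ≤ x) (h1 : x ≤ 1) : Real.log x ^ 2 ≤ 4 * x⁻¹ := by
  rcases eq_or_lt_of_le h0 with h | h
  · simp [← h]
  · have hinv1 : 1 ≤ x⁻¹ := by rw [← one_div, le_div_iff₀ h]; linarith
    have hlog : Real.log x ^ 2 = Real.log x⁻¹ ^ 2 := by rw [Real.log_inv]; ring
    have hle : Real.log x⁻¹ ≤ x⁻¹ ^ (1/2 : ℝ) / (1/2 : ℝ) :=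
      Real.log_le_rpow_div (by positivity) (by norm_num)
    have hnn : 0 ≤ Real.log x⁻¹ := Real.log_nonneg hinv1
    rw [hlog]
    calc Real.log x⁻¹ ^ 2 ≤ (x⁻¹ ^ (1/2 : ℝ) / (1/2 : ℝ)) ^ 2 := by
          apply pow_le_pow_left₀ hnn hle
      _ = 4 * x⁻¹ := by
          rw [div_pow, ← Real.rpow_natCast (x⁻¹ ^ (1/2 : ℝ)) 2,
            ← Real.rpow_mul (by positivity)]
          norm_num
          ring

lemma logsq_le_far {x t : ℝ} (ht : 0 < t) (h1 : 1 ≤ x) :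
    Real.log x ^ 2 ≤ t⁻¹ ^ 2 * x ^ (2 * t) := by
  have hx0 : (0:ℝ) < x := lt_of_lt_of_le one_pos h1
  have hle : Real.log x ≤ x ^ t / t := Real.log_le_rpow_div hx0.le ht
  have hnn : 0 ≤ Real.log x := Real.log_nonneg h1
  calc Real.log x ^ 2 ≤ (x ^ t / t) ^ 2 := by apply pow_le_pow_left₀ hnn hle
    _ = t⁻¹ ^ 2 * x ^ (2 * t) := by
        rw [div_pow, ← Real.rpow_natCast (x ^ t) 2, ← Real.rpow_mul hx0.le,
          div_eq_inv_mul, ← inv_pow]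
        norm_num [mul_comm]

lemma logsq_bound (t : ℝ) (ht0 : 0 < t) (ht1 : 2 * t ≤ 1)
    (r r' : EuclideanSpace ℝ (Fin 2)) :
    Real.log ‖r - r'‖ ^ 2 ≤ Kfun (r - r') + t⁻¹ ^ 2 * (‖r‖ ^ (2*t) + ‖r'‖ ^ (2*t)) := by
  have ht2 : (0:ℝ) ≤ 2 * t := by linarith
  by_cases h : ‖r - r'‖ ≤ 1
  · rw [Kfun, if_pos h]
    have h1 := logsq_le_near (norm_nonneg (r - r')) h
    have h2 : 0 ≤ t⁻¹ ^ 2 * (‖r‖ ^ (2*t) + ‖r'‖ ^ (2*t)) := by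
      have := Real.rpow_nonneg (norm_nonneg r) (2*t)
      have := Real.rpow_nonneg (norm_nonneg r') (2*t)
      positivity
    linarith
  · rw [Kfun, if_neg h]
    push_neg at h
    have h1 := logsq_le_far ht0 h.le
    have h2 : ‖r - r'‖ ^ (2*t) ≤ ‖r‖ ^ (2*t) + ‖r'‖ ^ (2*t) := by
      calc ‖r - r'‖ ^ (2*t) ≤ (‖r‖ + ‖r'‖) ^ (2*t) :=
            Real.rpow_le_rpow (norm_nonneg _) (norm_sub_le _ _) ht2
        _ ≤ _ := add_rpow_le' (norm_nonneg _) (norm_nonneg _) ht2 ht1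
    have h3 : (0:ℝ) ≤ t⁻¹ ^ 2 := by positivity
    have h4 := mul_le_mul_of_nonneg_left h2 h3
    linarith

lemma mul_le_sq_add_sq' (a b : ℝ≥0∞) : a * b ≤ a ^ 2 + b ^ 2 := by
  rcases le_total a b with h | h
  · calc a * b ≤ b * b := mul_le_mul_left h b
      _ = b ^ 2 := (sq b).symm
      _ ≤ _ := le_add_self
  · calc a * b ≤ a * a := mul_le_mul_right h a
      _ = a ^ 2 := (sq a).symm
      _ ≤ _ := le_self_add

lemma Kfun_neg (x : E2) : Kfun (-x) = Kfun x := by unfold Kfun; rw [norm_neg]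

lemma key (V : E2 → ℝ) (mV : Measurable V)
    (hV1 : Integrable V) (hV2 : MemLp V 2 volume)
    (s : ℝ) (hs : 0 < s)
    (hVs : Integrable (fun r : E2 => ‖r‖ ^ (2 * s) * |V r|)) :
    (∫⁻ r : E2, ∫⁻ r' : E2,
        ENNReal.ofReal (|V r| * Real.log ‖r - r'‖ ^ 2 * |V r'|)) < ∞ := by
  set t := min s (1/2) with htdef
  have ht0 : 0 < t := lt_min hs (by norm_num)
  have ht1 : 2 * t ≤ 1 := by
    have : t ≤ 1/2 := min_le_right _ _
    linarith
  have hts : t ≤ s := min_le_left _ _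
  set gV : E2 → ℝ≥0∞ := fun r => ENNReal.ofReal |V r| with hgV
  set gK : E2 → ℝ≥0∞ := fun x => ENNReal.ofReal (Kfun x) with hgK
  set hh : E2 → ℝ≥0∞ := fun r => ENNReal.ofReal (‖r‖ ^ (2*t)) with hhh
  have mgV : Measurable gV := ENNReal.measurable_ofReal.comp mV.abs
  have mgK : Measurable gK := ENNReal.measurable_ofReal.comp measurable_Kfun
  have mhh : Measurable hh := ENNReal.measurable_ofReal.comp (by fun_prop)
  have hgVtop : ∀ r, gV r ≠ ∞ := fun r => ofReal_ne_top
  have hhhtop : ∀ r, hh r ≠ ∞ := fun r => ofReal_ne_top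
  -- finite constants
  set A := ∫⁻ r : E2, gV r with hA
  have hAtop : A ≠ ∞ := hV1.abs.lintegral_lt_top.ne
  set B := ∫⁻ r : E2, gV r ^ 2 with hB
  have hBtop : B ≠ ∞ := by
    have h2 := (hV2.integrable_norm_rpow two_ne_zero ENNReal.ofNat_ne_top).lintegral_lt_top
    refine ne_of_lt (lt_of_le_of_lt (le_of_eq ?_) h2)
    apply lintegral_congr; intro r
    rw [hgV]
    simp only [← ENNReal.ofReal_pow (abs_nonneg _)]
    congr 1
    rw [ENNReal.toReal_ofNat, Real.norm_eq_abs,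
      show (2:ℝ) = ((2:ℕ):ℝ) by norm_num, Real.rpow_natCast]
  set D := ∫⁻ r : E2, ENNReal.ofReal (‖r‖ ^ (2*s) * |V r|) with hD
  have hDtop : D ≠ ∞ := hVs.lintegral_lt_top.ne
  set C := ∫⁻ r : E2, gV r * hh r with hC
  have hCtop : C ≠ ∞ := by
    have hpt : ∀ r : E2, gV r * hh r ≤ gV r + ENNReal.ofReal (‖r‖ ^ (2*s) * |V r|) := by
      intro r
      have hb : ‖r‖ ^ (2*t) ≤ 1 + ‖r‖ ^ (2*s) := by
        by_cases h : ‖r‖ ≤ 1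
        · have h1 : ‖r‖ ^ (2*t) ≤ 1 :=
            Real.rpow_le_one (norm_nonneg r) h (by linarith : (0:ℝ) ≤ 2*t)
          have h2 := Real.rpow_nonneg (norm_nonneg r) (2*s)
          linarith
        · push_neg at h
          have h1 := Real.rpow_le_rpow_of_exponent_le h.le
            (by linarith : 2*t ≤ 2*s)
          linarith
      calc gV r * hh r = ENNReal.ofReal (|V r| * ‖r‖ ^ (2*t)) := by
            rw [hgV, hhh, ← ENNReal.ofReal_mul (abs_nonneg _)]
        _ ≤ ENNReal.ofReal (|V r| * (1 + ‖r‖ ^ (2*s))) :=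
            ENNReal.ofReal_le_ofReal (mul_le_mul_of_nonneg_left hb (abs_nonneg _))
        _ = gV r + ENNReal.ofReal (‖r‖ ^ (2*s) * |V r|) := by
            rw [mul_add, mul_one,
              ENNReal.ofReal_add (abs_nonneg _)
                (mul_nonneg (abs_nonneg _) (Real.rpow_nonneg (norm_nonneg r) _)),
              mul_comm |V r|, hgV]
    refine ne_of_lt (lt_of_le_of_lt (lintegral_mono hpt) ?_)
    rw [lintegral_add_left mgV]
    exact ENNReal.add_lt_top.2 ⟨hAtop.lt_top, hDtop.lt_top⟩
  set IK := ∫⁻ x : E2, gK x with hIK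
  have hIKtop : IK ≠ ∞ := lintegral_Kfun_lt_top.ne
  set oc := ENNReal.ofReal (t⁻¹ ^ 2) with hoc
  have hoctop : oc ≠ ∞ := ofReal_ne_top
  -- translation invariance of gK integrals
  have htrans : ∀ r : E2, (∫⁻ x : E2, gK (x - r)) = IK := fun r =>
    lintegral_sub_right_eq_self gK r
  have htrans' : ∀ r : E2, (∫⁻ x : E2, gK (r - x)) = IK := by
    intro r
    have hev : ∀ x : E2, gK (r - x) = gK (x - r) := by
      intro x
      rw [hgK, show r - x = -(x - r) by abel]
      simp only [Kfun_neg]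
    rw [lintegral_congr hev]
    exact htrans r
  -- pointwise bound
  have hpt : ∀ r r' : E2, ENNReal.ofReal (|V r| * Real.log ‖r - r'‖ ^ 2 * |V r'|)
      ≤ (gV r * gV r') * gK (r - r') + oc * (gV r * hh r * gV r')
        + oc * (gV r * hh r' * gV r') := by
    intro r r'
    have hM : 0 ≤ Kfun (r - r') + t⁻¹ ^ 2 * (‖r‖ ^ (2*t) + ‖r'‖ ^ (2*t)) := by
      have h1 := Kfun_nonneg (r - r')
      have h2 := Real.rpow_nonneg (norm_nonneg r) (2*t)
      have h3 := Real.rpow_nonneg (norm_nonneg r') (2*t)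
      positivity
    have h1 : |V r| * Real.log ‖r - r'‖ ^ 2 * |V r'| ≤
        |V r| * (Kfun (r - r') + t⁻¹ ^ 2 * (‖r‖ ^ (2*t) + ‖r'‖ ^ (2*t))) * |V r'| :=
      mul_le_mul_of_nonneg_right
        (mul_le_mul_of_nonneg_left (logsq_bound t ht0 ht1 r r') (abs_nonneg _))
        (abs_nonneg _)
    refine (ENNReal.ofReal_le_ofReal h1).trans (le_of_eq ?_)
    rw [ENNReal.ofReal_mul (mul_nonneg (abs_nonneg _) hM),
      ENNReal.ofReal_mul (abs_nonneg _),
      ENNReal.ofReal_add (Kfun_nonneg _) (by positivity),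
      ENNReal.ofReal_mul (by positivity : (0:ℝ) ≤ t⁻¹ ^ 2),
      ENNReal.ofReal_add (Real.rpow_nonneg (norm_nonneg r) _)
        (Real.rpow_nonneg (norm_nonneg r') _)]
    simp only [hgV, hgK, hhh, hoc]
    ring
  -- inner integral bound
  have hinner : ∀ r : E2,
      (∫⁻ r' : E2, ENNReal.ofReal (|V r| * Real.log ‖r - r'‖ ^ 2 * |V r'|))
        ≤ gV r ^ 2 * IK + (∫⁻ r' : E2, gV r' ^ 2 * gK (r - r'))
          + oc * gV r * hh r * A + oc * gV r * C := by
    intro r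
    have msubr : Measurable fun r' : E2 => gK (r - r') :=
      mgK.comp (measurable_id.const_sub r)
    calc (∫⁻ r' : E2, ENNReal.ofReal (|V r| * Real.log ‖r - r'‖ ^ 2 * |V r'|))
        ≤ ∫⁻ r' : E2, ((gV r * gV r') * gK (r - r') + oc * (gV r * hh r * gV r')
            + oc * (gV r * hh r' * gV r')) := lintegral_mono (hpt r)
      _ ≤ ∫⁻ r' : E2, ((gV r ^ 2 + gV r' ^ 2) * gK (r - r')
            + oc * (gV r * hh r * gV r') + oc * (gV r * hh r' * gV r')) := by
          apply lintegral_mono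
          intro r'
          exact add_le_add_left (add_le_add_left
            (mul_le_mul_left (mul_le_sq_add_sq' _ _) _) _) _
      _ = ∫⁻ r' : E2, (gV r ^ 2 * gK (r - r') + gV r' ^ 2 * gK (r - r')
            + (oc * gV r * hh r) * gV r' + (oc * gV r) * (gV r' * hh r')) :=
          lintegral_congr fun r' => by ring
      _ = gV r ^ 2 * IK + (∫⁻ r' : E2, gV r' ^ 2 * gK (r - r'))
          + oc * gV r * hh r * A + oc * gV r * C := by
          rw [lintegral_add_left (((msubr.const_mul _).fun_add
              ((mgV.pow_const 2).fun_mul msubr)).fun_add (mgV.const_mul _)),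
            lintegral_add_left ((msubr.const_mul _).fun_add
              ((mgV.pow_const 2).fun_mul msubr)),
            lintegral_add_left (msubr.const_mul _)]
          have e1 : (∫⁻ r' : E2, gV r ^ 2 * gK (r - r')) = gV r ^ 2 * IK := by
            rw [lintegral_const_mul' _ _ (ENNReal.pow_ne_top (hgVtop r)), htrans' r]
          have e3 : (∫⁻ r' : E2, (oc * gV r * hh r) * gV r') = oc * gV r * hh r * A := by
            rw [lintegral_const_mul' _ _
              (mul_ne_top (mul_ne_top hoctop (hgVtop r)) (hhhtop r))]
          have e4 : (∫⁻ r' : E2, (oc * gV r) * (gV r' * hh r')) = oc * gV r * C := by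
            rw [lintegral_const_mul' _ _ (mul_ne_top hoctop (hgVtop r))]
          rw [e1, e3, e4]
  -- conclude
  have muncurry : Measurable
      (Function.uncurry fun r r' : E2 => gV r' ^ 2 * gK (r - r')) := by
    apply Measurable.fun_mul
    · exact (mgV.comp measurable_snd).pow_const 2
    · exact mgK.comp (measurable_fst.sub measurable_snd)
  have hswap : (∫⁻ r : E2, ∫⁻ r' : E2, gV r' ^ 2 * gK (r - r'))
      = ∫⁻ r' : E2, ∫⁻ r : E2, gV r' ^ 2 * gK (r - r') :=
    lintegral_lintegral_swap muncurry.aemeasurable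
  have hmid : (∫⁻ r : E2, ∫⁻ r' : E2, gV r' ^ 2 * gK (r - r')) = B * IK := by
    rw [hswap]
    have : ∀ r' : E2, (∫⁻ r : E2, gV r' ^ 2 * gK (r - r')) = gV r' ^ 2 * IK := by
      intro r'
      rw [lintegral_const_mul' _ _ (ENNReal.pow_ne_top (hgVtop r')), htrans r']
    rw [lintegral_congr this, lintegral_mul_const' _ _ hIKtop, hB]
  have mb : Measurable fun r : E2 => ∫⁻ r' : E2, gV r' ^ 2 * gK (r - r') :=
    Measurable.lintegral_prod_right' muncurry
  calc (∫⁻ r : E2, ∫⁻ r' : E2,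
        ENNReal.ofReal (|V r| * Real.log ‖r - r'‖ ^ 2 * |V r'|))
      ≤ ∫⁻ r : E2, (gV r ^ 2 * IK + (∫⁻ r' : E2, gV r' ^ 2 * gK (r - r'))
          + oc * gV r * hh r * A + oc * gV r * C) := lintegral_mono hinner
    _ = B * IK + B * IK + C * (oc * A) + oc * C * A := by
        rw [lintegral_add_left ((((mgV.pow_const 2).mul_const _).fun_add mb).fun_add
            (((mgV.const_mul _).fun_mul mhh).mul_const _)),
          lintegral_add_left (((mgV.pow_const 2).mul_const _).fun_add mb),
          lintegral_add_left ((mgV.pow_const 2).mul_const _)]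
        have f1 : (∫⁻ r : E2, gV r ^ 2 * IK) = B * IK :=
          lintegral_mul_const' _ _ hIKtop
        have f3 : (∫⁻ r : E2, oc * gV r * hh r * A) = C * (oc * A) := by
          rw [show (fun r : E2 => oc * gV r * hh r * A)
              = fun r : E2 => (gV r * hh r) * (oc * A) from funext fun r => by ring]
          exact lintegral_mul_const' _ _ (mul_ne_top hoctop hAtop)
        have f4 : (∫⁻ r : E2, oc * gV r * C) = oc * C * A := by
          rw [show (fun r : E2 => oc * gV r * C) = fun r : E2 => (oc * C) * gV r
              from funext fun r => by ring,
            lintegral_const_mul' _ _ (mul_ne_top hoctop hCtop)]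
        rw [f1, hmid, f3, f4]
    _ < ∞ := by
        refine ENNReal.add_lt_top.2 ⟨ENNReal.add_lt_top.2
          ⟨ENNReal.add_lt_top.2 ⟨?_, ?_⟩, ?_⟩, ?_⟩
        · exact ENNReal.mul_lt_top hBtop.lt_top hIKtop.lt_top
        · exact ENNReal.mul_lt_top hBtop.lt_top hIKtop.lt_top
        · exact ENNReal.mul_lt_top hCtop.lt_top
            (ENNReal.mul_lt_top hoctop.lt_top hAtop.lt_top)
        · exact ENNReal.mul_lt_top
            (ENNReal.mul_lt_top hoctop.lt_top hCtop.lt_top) hAtop.lt_top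

/-- From the proof of Lemma 4.1 (the operator `L` is Hilbert–Schmidt): if
`V ∈ L¹(ℝ²) ∩ L²(ℝ²)` and `∫ |r|^{2s}|V(r)| dr < ∞` for some `s > 0`, then
`∫∫ |V(r)| (ln|r−r'|)² |V(r')| dr dr' < ∞`. -/
theorem stmt6 (V : EuclideanSpace ℝ (Fin 2) → ℝ)
    (hV1 : Integrable V) (hV2 : MemLp V 2 volume)
    (s : ℝ) (hs : 0 < s)
    (hVs : Integrable (fun r : EuclideanSpace ℝ (Fin 2) => ‖r‖ ^ (2 * s) * |V r|)) :
    (∫⁻ r : EuclideanSpace ℝ (Fin 2), ∫⁻ r' : EuclideanSpace ℝ (Fin 2),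
        ENNReal.ofReal (|V r| * Real.log ‖r - r'‖ ^ 2 * |V r'|)) < ∞ := by
  have hsm := hV1.aestronglyMeasurable
  set W := hsm.mk V with hWdef
  have hVW : V =ᵐ[volume] W := hsm.ae_eq_mk
  have mW : Measurable W := hsm.stronglyMeasurable_mk.measurable
  have heq : (∫⁻ r : E2, ∫⁻ r' : E2,
        ENNReal.ofReal (|V r| * Real.log ‖r - r'‖ ^ 2 * |V r'|))
      = ∫⁻ r : E2, ∫⁻ r' : E2,
        ENNReal.ofReal (|W r| * Real.log ‖r - r'‖ ^ 2 * |W r'|) := by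
    apply lintegral_congr_ae
    filter_upwards [hVW] with r hr
    apply lintegral_congr_ae
    filter_upwards [hVW] with r' hr'
    rw [hr, hr']
  rw [heq]
  exact key W mW (hV1.congr hVW) (hV2.ae_eq hVW) s hs
    (hVs.congr (by filter_upwards [hVW] with r hr; rw [hr]))
end

section
/- Let z ∈ ℂ with Re(z) > 0, let c > 0, k ∈ ℝ, l ≥ 0, and let 0 < z' < √(Re(z)). Then sup over x ∈ ℝ^d with |x| ≥ c of the integral ∫_0^∞ t^k |x|^l exp(−|x|²/(4t) − Re(z)·t + z'|x|) dt is finite. -/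
open MeasureTheory Real ENNReal

lemma rpow_le_exp_mul {u l : ℝ} (hu : 0 ≤ u) (hl : 0 ≤ l) : u ^ l ≤ Real.exp (l * u) := by
  rcases le_total u 1 with h | h
  · calc u ^ l ≤ 1 := Real.rpow_le_one hu h hl
      _ ≤ Real.exp (l * u) := Real.one_le_exp (by positivity)
  · have hu0 : 0 < u := lt_of_lt_of_le one_pos h
    rw [Real.rpow_def_of_pos hu0]
    apply Real.exp_le_exp.mpr
    have hlog : Real.log u ≤ u := (Real.log_le_sub_one_of_pos hu0).trans (by linarith)
    calc Real.log u * l = l * Real.log u := by ring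
      _ ≤ l * u := mul_le_mul_of_nonneg_left hlog hl

lemma rpow_mul_exp_neg_le {l ε : ℝ} (hl : 0 ≤ l) (hε : 0 < ε) {r : ℝ} (hr : 0 ≤ r) :
    r ^ l * Real.exp (-(ε * r)) ≤ (2 * max l 1 / ε) ^ l := by
  set L := max l 1 with hLdef
  have hL : (0:ℝ) < L := lt_of_lt_of_le one_pos (le_max_right _ _)
  have hlL : l ≤ L := le_max_left _ _
  have h1 : r ^ l ≤ (2 * L / ε) ^ l * Real.exp (ε * r / 2) := by
    have hrw : r = (2 * L / ε) * (ε * r / (2 * L)) := by field_simp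
    calc r ^ l = ((2 * L / ε) * (ε * r / (2 * L))) ^ l := by rw [← hrw]
      _ = (2 * L / ε) ^ l * (ε * r / (2 * L)) ^ l :=
          Real.mul_rpow (by positivity) (by positivity)
      _ ≤ (2 * L / ε) ^ l * Real.exp (l * (ε * r / (2 * L))) := by
          gcongr
          exact rpow_le_exp_mul (by positivity) hl
      _ ≤ (2 * L / ε) ^ l * Real.exp (ε * r / 2) := by
          gcongr
          have h2 : l * (ε * r / (2 * L)) ≤ L * (ε * r / (2 * L)) :=
            mul_le_mul_of_nonneg_right hlL (by positivity)
          have h3 : L * (ε * r / (2 * L)) = ε * r / 2 := by field_simp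
          linarith
  calc r ^ l * Real.exp (-(ε * r))
      ≤ ((2 * L / ε) ^ l * Real.exp (ε * r / 2)) * Real.exp (-(ε * r)) :=
        mul_le_mul_of_nonneg_right h1 (Real.exp_pos _).le
    _ = (2 * L / ε) ^ l * Real.exp (ε * r / 2 + -(ε * r)) := by
        rw [mul_assoc, ← Real.exp_add]
    _ ≤ (2 * L / ε) ^ l * 1 := by
        gcongr
        exact Real.exp_le_one_iff.mpr (by nlinarith [mul_nonneg hε.le hr])
    _ = (2 * L / ε) ^ l := mul_one _

/-- The key uniform bound in the proof of Lemma A.2: for `Re(z) > 0`, `c > 0`, `k ∈ ℝ`,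
`l ≥ 0` and `0 < z' < √(Re z)`, the integrals
`∫_0^∞ t^k |x|^l exp(−|x|²/(4t) − Re(z)t + z'|x|) dt` are bounded uniformly in
`x` with `|x| ≥ c`. -/
theorem stmt12 (d : ℕ) (hd : 1 ≤ d) (z : ℂ) (hz : 0 < z.re)
    (c : ℝ) (hc : 0 < c) (k l z' : ℝ) (hl : 0 ≤ l) (hz'0 : 0 < z')
    (hz' : z' < Real.sqrt z.re) :
    ∃ C : ℝ, ∀ x : EuclideanSpace ℝ (Fin d), c ≤ ‖x‖ →
      (∫⁻ t in Set.Ioi (0 : ℝ),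
          ENNReal.ofReal (t ^ k * ‖x‖ ^ l *
            Real.exp (-(‖x‖ ^ 2 / (4 * t)) - z.re * t + z' * ‖x‖))) ≤
        ENNReal.ofReal C := by
  set a := z.re with ha_def
  have ha : 0 < a := hz
  set s := Real.sqrt a with hs_def
  have hs : 0 < s := Real.sqrt_pos.mpr ha
  have hs2 : s ^ 2 = a := Real.sq_sqrt ha.le
  set δ := (s - z') / (2 * s) with hδ_def
  have hδ : 0 < δ := by apply div_pos <;> [linarith; linarith]
  have hδ1 : δ < 1 := by
    rw [div_lt_one (by linarith)]; linarith
  have hz'' : z' = s - 2 * δ * s := by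
    have h := div_mul_cancel₀ (s - z') (ne_of_gt (by linarith : (0:ℝ) < 2 * s))
    rw [← hδ_def] at h; linarith
  set ε := δ * s with hε_def
  have hε : 0 < ε := by positivity
  set α := δ * c ^ 2 / 4 with hα_def
  have hα : 0 < α := by positivity
  set β := δ * a with hβ_def
  have hβ : 0 < β := by positivity
  set kp := max k 0 with hkp_def
  set km := max (-k) 0 with hkm_def
  have hkp : 0 ≤ kp := le_max_right _ _
  have hkm : 0 ≤ km := le_max_right _ _
  have hkk : kp - km = k := by
    rcases le_total 0 k with h | h
    · rw [hkp_def, hkm_def, max_eq_left h, max_eq_right (by linarith)]; ring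
    · rw [hkp_def, hkm_def, max_eq_right h, max_eq_left (by linarith)]; ring
  set M1 := (2 * max kp 1 / (β / 2)) ^ kp with hM1_def
  set M2 := (2 * max km 1 / α) ^ km with hM2_def
  set Mr := (2 * max l 1 / ε) ^ l with hMr_def
  have hM1 : 0 ≤ M1 := Real.rpow_nonneg (by positivity) _
  have hM2 : 0 ≤ M2 := Real.rpow_nonneg (by positivity) _
  have hMr : 0 ≤ Mr := Real.rpow_nonneg (by positivity) _
  set D := M1 * M2 * Mr with hD_def
  refine ⟨D * ∫ t in Set.Ioi (0:ℝ), Real.exp (-(β/2) * t), fun x hx => ?_⟩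
  set r := ‖x‖ with hr_def
  have hr : 0 < r := lt_of_lt_of_le hc hx
  have hpt : ∀ t ∈ Set.Ioi (0:ℝ),
      t ^ k * r ^ l * Real.exp (-(r ^ 2 / (4 * t)) - a * t + z' * r)
        ≤ D * Real.exp (-(β/2) * t) := by
    intro t ht
    rw [Set.mem_Ioi] at ht
    have h4t : (0:ℝ) < 4 * t := by linarith
    have hc2 : c ^ 2 ≤ r ^ 2 := by nlinarith
    have hT : (z' * r + ε * r + β * t) * (4 * t) + 4 * α ≤ r ^ 2 + a * t * (4 * t) := by
      have expand : r ^ 2 + a * t * (4 * t) - ((z' * r + ε * r + β * t) * (4 * t) + 4 * α)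
          = (1 - δ) * (r - 2 * t * s) ^ 2 + δ * (r ^ 2 - c ^ 2) := by
        rw [hz'', hε_def, hα_def, hβ_def, ← hs2]; ring
      have p1 : (0:ℝ) ≤ (1 - δ) * (r - 2 * t * s) ^ 2 :=
        mul_nonneg (by linarith) (sq_nonneg _)
      have p2 : (0:ℝ) ≤ δ * (r ^ 2 - c ^ 2) := mul_nonneg hδ.le (by linarith)
      linarith
    have hE : -(r ^ 2 / (4 * t)) - a * t + z' * r ≤ -(α / t) - β * t - ε * r := by
      have h2 := (div_le_div_iff_of_pos_right h4t).mpr hT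
      have e1 : ((z' * r + ε * r + β * t) * (4 * t) + 4 * α) / (4 * t)
          = z' * r + ε * r + β * t + α / t := by
        field_simp
      have e2 : (r ^ 2 + a * t * (4 * t)) / (4 * t) = r ^ 2 / (4 * t) + a * t := by
        field_simp
      rw [e1, e2] at h2
      linarith
    have htk : t ^ k = t ^ kp * t⁻¹ ^ km := by
      rw [Real.inv_rpow ht.le, ← Real.rpow_neg ht.le, ← Real.rpow_add ht, ← hkk]
      ring_nf
    have hsplit : Real.exp (-(α / t) - β * t - ε * r)
        = Real.exp (-(β / 2 * t)) * Real.exp (-(α * t⁻¹)) * Real.exp (-(ε * r))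
            * Real.exp (-(β / 2 * t)) := by
      rw [← Real.exp_add, ← Real.exp_add, ← Real.exp_add]
      congr 1
      field_simp
      ring
    calc t ^ k * r ^ l * Real.exp (-(r ^ 2 / (4 * t)) - a * t + z' * r)
        ≤ t ^ k * r ^ l * Real.exp (-(α / t) - β * t - ε * r) := by
          apply mul_le_mul_of_nonneg_left (Real.exp_le_exp.mpr hE)
          have := Real.rpow_nonneg ht.le k
          have := Real.rpow_nonneg hr.le l
          positivity
      _ = (t ^ kp * Real.exp (-(β / 2 * t))) * (t⁻¹ ^ km * Real.exp (-(α * t⁻¹)))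
            * (r ^ l * Real.exp (-(ε * r))) * Real.exp (-(β / 2 * t)) := by
          rw [htk, hsplit]; ring
      _ ≤ M1 * M2 * Mr * Real.exp (-(β / 2 * t)) := by
          have b1 : t ^ kp * Real.exp (-(β / 2 * t)) ≤ M1 :=
            rpow_mul_exp_neg_le hkp (by positivity) ht.le
          have b2 : t⁻¹ ^ km * Real.exp (-(α * t⁻¹)) ≤ M2 :=
            rpow_mul_exp_neg_le hkm hα (by positivity)
          have b3 : r ^ l * Real.exp (-(ε * r)) ≤ Mr :=
            rpow_mul_exp_neg_le hl hε hr.le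
          have n1 : 0 ≤ t ^ kp * Real.exp (-(β / 2 * t)) := by
            have := Real.rpow_nonneg ht.le kp; positivity
          have n2 : 0 ≤ t⁻¹ ^ km * Real.exp (-(α * t⁻¹)) := by
            have : (0:ℝ) ≤ t⁻¹ ^ km := Real.rpow_nonneg (by positivity) km
            positivity
          have n3 : 0 ≤ r ^ l * Real.exp (-(ε * r)) := by
            have := Real.rpow_nonneg hr.le l; positivity
          gcongr
      _ = D * Real.exp (-(β / 2) * t) := by rw [hD_def]; ring_nf
  have hbound : (∫⁻ t in Set.Ioi (0:ℝ),
        ENNReal.ofReal (t ^ k * r ^ l * Real.exp (-(r ^ 2 / (4 * t)) - a * t + z' * r)))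
      ≤ ∫⁻ t in Set.Ioi (0:ℝ), ENNReal.ofReal (D * Real.exp (-(β/2) * t)) := by
    have hmeas : Measurable fun t : ℝ => ENNReal.ofReal (D * Real.exp (-(β/2) * t)) := by
      apply Measurable.ennreal_ofReal
      exact measurable_const.mul (Real.measurable_exp.comp (measurable_id.const_mul _))
    apply setLIntegral_mono hmeas
    exact fun t ht => ENNReal.ofReal_le_ofReal (hpt t ht)
  refine hbound.trans (le_of_eq ?_)
  have hint : IntegrableOn (fun t => D * Real.exp (-(β/2) * t)) (Set.Ioi (0:ℝ)) :=
    (exp_neg_integrableOn_Ioi 0 (by positivity : (0:ℝ) < β/2)).const_mul D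
  rw [← ofReal_integral_eq_lintegral_ofReal hint
      (ae_of_all _ fun t => by positivity)]
  congr 1
  rw [integral_const_mul]
end

section
/- For every t > 0 and every a ∈ ℝ², ∫_{ℝ²} |y + a|^{-1} exp(−|y|²/(4t)) dy ≤ √(4π³ t), with equality when a = 0. -/
open MeasureTheory Real Metric Set ENNReal

local notation "E2" => EuclideanSpace ℝ (Fin 2)


lemma polar_eq (t : ℝ) (ht : 0 < t) :
    (∫ y : EuclideanSpace ℝ (Fin 2), ‖y‖⁻¹ * Real.exp (-‖y‖ ^ 2 / (4 * t))) =
      Real.sqrt (4 * π ^ 3 * t) := by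
  have h := MeasureTheory.integral_fun_norm_addHaar (volume : Measure (EuclideanSpace ℝ (Fin 2)))
    (fun r : ℝ => r⁻¹ * Real.exp (-r ^ 2 / (4 * t)))
  simp only [finrank_euclideanSpace, Fintype.card_fin] at h
  rw [h]
  have hball : (volume (ball (0 : EuclideanSpace ℝ (Fin 2)) 1)).toReal = π := by
    rw [EuclideanSpace.volume_ball]
    norm_num
    exact Real.sq_sqrt pi_nonneg
  rw [measureReal_def, hball]
  have hin : ∫ y in Set.Ioi (0:ℝ), y ^ (2 - 1) • (y⁻¹ * Real.exp (-y ^ 2 / (4 * t)))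
      = ∫ y in Set.Ioi (0:ℝ), Real.exp (-(1/(4*t)) * y ^ 2) := by
    refine setIntegral_congr_fun measurableSet_Ioi fun y hy => ?_
    have : (y:ℝ) ≠ 0 := ne_of_gt hy
    field_simp
    simp only [smul_eq_mul, show (2:ℕ) - 1 = 1 from rfl, pow_one]
    field_simp
  rw [hin, integral_gaussian_Ioi]
  have h4t : (0:ℝ) < 4 * t := by linarith
  have : π / (1 / (4 * t)) = π * (4 * t) := by field_simp
  rw [this]
  rw [show (4 * π ^ 3 * t : ℝ) = π^2 * (π * (4*t)) by ring, Real.sqrt_mul (sq_nonneg π),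
    Real.sqrt_sq pi_nonneg]
  rw [smul_eq_mul]
  ring

lemma lt_inv_swap {s v : ℝ} (hs : 0 < s) (hv : 0 < v) : s < v⁻¹ ↔ v < s⁻¹ := by
  rw [← one_div, ← one_div, lt_div_iff₀ hv, lt_div_iff₀ hs, mul_comm]


lemma ball_shift (t : ℝ) (ht : 0 < t) (c : E2) (r : ℝ) :
    ∫⁻ y in ball c r, ENNReal.ofReal (Real.exp (-‖y‖ ^ 2 / (4 * t))) ≤
    ∫⁻ y in ball (0 : E2) r, ENNReal.ofReal (Real.exp (-‖y‖ ^ 2 / (4 * t))) := by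
  rcases le_or_gt r 0 with hr | hr
  · simp [Metric.ball_eq_empty.2 hr]
  set g : E2 → ℝ≥0∞ := fun y => ENNReal.ofReal (Real.exp (-‖y‖ ^ 2 / (4 * t))) with hgdef
  have hgm : Measurable g := by
    apply ENNReal.measurable_ofReal.comp
    exact (Real.continuous_exp.comp (by continuity)).measurable
  set e : ℝ≥0∞ := ENNReal.ofReal (Real.exp (-r ^ 2 / (4 * t))) with hedef
  have hb0 : MeasurableSet (ball (0 : E2) r) := measurableSet_ball
  have hbc : MeasurableSet (ball c r) := measurableSet_ball
  have hμ : volume (ball c r \ ball (0:E2) r) = volume (ball (0:E2) r \ ball c r) := by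
    have h1 := measure_diff_add_inter (μ := volume) (ball c r) hb0
    have h2 := measure_diff_add_inter (μ := volume) (ball (0:E2) r) hbc
    have hcc : volume (ball c r) = volume (ball (0:E2) r) :=
      Measure.addHaar_ball_center volume c r
    have hfin : volume (ball c r ∩ ball (0:E2) r) ≠ ⊤ :=
      ((measure_mono inter_subset_left).trans_lt measure_ball_lt_top).ne
    rw [inter_comm] at h2
    have := h1.trans (hcc.trans h2.symm)
    exact (ENNReal.add_left_inj hfin).1 this
  -- bound on the outer piece
  have houter : ∫⁻ y in ball c r \ ball (0:E2) r, g y ≤ e * volume (ball c r \ ball (0:E2) r) := by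
    calc ∫⁻ y in ball c r \ ball (0:E2) r, g y
        ≤ ∫⁻ _ in ball c r \ ball (0:E2) r, e := by
          refine setLIntegral_mono measurable_const fun y hy => ?_
          have hy2 : r ≤ ‖y‖ := by
            have := hy.2
            simpa [Metric.mem_ball, dist_eq_norm, not_lt] using this
          apply ENNReal.ofReal_le_ofReal
          apply Real.exp_le_exp.2
          have : r ^ 2 ≤ ‖y‖ ^ 2 := by nlinarith [norm_nonneg y]
          rw [div_le_div_iff_of_pos_right (by linarith)]
          linarith
      _ = e * volume (ball c r \ ball (0:E2) r) := by
          rw [setLIntegral_const]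
  have hinner : e * volume (ball (0:E2) r \ ball c r) ≤ ∫⁻ y in ball (0:E2) r \ ball c r, g y := by
    calc e * volume (ball (0:E2) r \ ball c r)
        = ∫⁻ _ in ball (0:E2) r \ ball c r, e := (setLIntegral_const _ _).symm
      _ ≤ ∫⁻ y in ball (0:E2) r \ ball c r, g y := by
          refine setLIntegral_mono hgm fun y hy => ?_
          have hy1 : ‖y‖ < r := by
            have := hy.1
            simpa [Metric.mem_ball, dist_eq_norm] using this
          apply ENNReal.ofReal_le_ofReal
          apply Real.exp_le_exp.2
          have : ‖y‖ ^ 2 ≤ r ^ 2 := by nlinarith [norm_nonneg y]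
          rw [div_le_div_iff_of_pos_right (by linarith)]
          linarith
  calc ∫⁻ y in ball c r, g y
      = (∫⁻ y in ball c r ∩ ball (0:E2) r, g y) + ∫⁻ y in ball c r \ ball (0:E2) r, g y := by
        rw [lintegral_inter_add_diff g _ hb0]
    _ ≤ (∫⁻ y in ball c r ∩ ball (0:E2) r, g y) + e * volume (ball c r \ ball (0:E2) r) := by
        gcongr
    _ = (∫⁻ y in ball (0:E2) r ∩ ball c r, g y) + e * volume (ball (0:E2) r \ ball c r) := by
        rw [inter_comm, hμ]
    _ ≤ (∫⁻ y in ball (0:E2) r ∩ ball c r, g y) + ∫⁻ y in ball (0:E2) r \ ball c r, g y := by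
        gcongr
    _ = ∫⁻ y in ball (0:E2) r, g y := by
        rw [lintegral_inter_add_diff g _ hbc]


lemma layer_cake (t : ℝ) (c : E2) :
    (∫⁻ y : E2, ENNReal.ofReal (‖y + c‖⁻¹ * Real.exp (-‖y‖ ^ 2 / (4 * t)))) =
    ∫⁻ s : ℝ, ∫⁻ y in {y : E2 | 0 < s ∧ s < ‖y + c‖⁻¹},
      ENNReal.ofReal (Real.exp (-‖y‖ ^ 2 / (4 * t))) := by
  set g : E2 → ℝ≥0∞ := fun y => ENNReal.ofReal (Real.exp (-‖y‖ ^ 2 / (4 * t))) with hgdef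
  have hgm : Measurable g :=
    ENNReal.measurable_ofReal.comp (Real.continuous_exp.comp (by continuity)).measurable
  have hvm : Measurable fun y : E2 => ‖y + c‖⁻¹ :=
    ((continuous_norm.comp (continuous_id.add continuous_const)).measurable).inv
  have hS : MeasurableSet {q : E2 × ℝ | 0 < q.2 ∧ q.2 < ‖q.1 + c‖⁻¹} := by
    refine MeasurableSet.inter ?_ ?_
    · exact measurableSet_lt measurable_const measurable_snd
    · exact measurableSet_lt measurable_snd (hvm.comp measurable_fst)
  set F : E2 × ℝ → ℝ≥0∞ :=
    fun p => Set.indicator {q : E2 × ℝ | 0 < q.2 ∧ q.2 < ‖q.1 + c‖⁻¹} (fun q => g q.1) p with hFdef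
  have hFm : Measurable F := (hgm.comp measurable_fst).indicator hS
  have step1 : ∀ y : E2, (∫⁻ s : ℝ, F (y, s)) =
      ENNReal.ofReal (‖y + c‖⁻¹ * Real.exp (-‖y‖ ^ 2 / (4 * t))) := by
    intro y
    have h1 : (fun s : ℝ => F (y, s)) =
        Set.indicator (Set.Ioo (0:ℝ) (‖y + c‖⁻¹)) (fun _ => g y) := by
      funext s
      simp [hFdef, Set.indicator_apply, Set.mem_Ioo, Set.mem_setOf_eq]
    rw [h1, lintegral_indicator measurableSet_Ioo _, setLIntegral_const, Real.volume_Ioo,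
      sub_zero, hgdef]
    rw [← ENNReal.ofReal_mul (Real.exp_nonneg _)]
    rw [mul_comm]
  have step2 : ∀ s : ℝ, (∫⁻ y : E2, F (y, s)) =
      ∫⁻ y in {y : E2 | 0 < s ∧ s < ‖y + c‖⁻¹}, g y := by
    intro s
    have h1 : (fun y : E2 => F (y, s)) =
        Set.indicator {y : E2 | 0 < s ∧ s < ‖y + c‖⁻¹} g := by
      funext y
      simp [hFdef, Set.indicator_apply, Set.mem_setOf_eq]
    have hset : MeasurableSet {y : E2 | 0 < s ∧ s < ‖y + c‖⁻¹} := by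
      rcases le_or_gt s 0 with hs | hs
      · convert MeasurableSet.empty (α := E2)
        ext y; simp [Set.mem_setOf_eq]; intro h; linarith
      · have : {y : E2 | 0 < s ∧ s < ‖y + c‖⁻¹} = {y : E2 | s < ‖y + c‖⁻¹} := by
          ext y; simp [hs]
        rw [this]
        exact measurableSet_lt measurable_const hvm
    rw [h1, lintegral_indicator hset _]
  calc (∫⁻ y : E2, ENNReal.ofReal (‖y + c‖⁻¹ * Real.exp (-‖y‖ ^ 2 / (4 * t))))
      = ∫⁻ y : E2, ∫⁻ s : ℝ, F (y, s) := by
        refine lintegral_congr fun y => (step1 y).symm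
    _ = ∫⁻ s : ℝ, ∫⁻ y : E2, F (y, s) := by
        exact lintegral_lintegral_swap hFm.aemeasurable
    _ = ∫⁻ s : ℝ, ∫⁻ y in {y : E2 | 0 < s ∧ s < ‖y + c‖⁻¹}, g y := by
        exact lintegral_congr fun s => step2 s

lemma L_mono (t : ℝ) (ht : 0 < t) (a : E2) :
    (∫⁻ y : E2, ENNReal.ofReal (‖y + a‖⁻¹ * Real.exp (-‖y‖ ^ 2 / (4 * t)))) ≤
    ∫⁻ y : E2, ENNReal.ofReal (‖y + 0‖⁻¹ * Real.exp (-‖y‖ ^ 2 / (4 * t))) := by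
  rw [layer_cake t a, layer_cake t 0]
  refine lintegral_mono fun s => ?_
  rcases le_or_gt s 0 with hs | hs
  · have h1 : {y : E2 | 0 < s ∧ s < ‖y + a‖⁻¹} = ∅ := by
      ext y; simp only [Set.mem_setOf_eq, Set.mem_empty_iff_false, iff_false, not_and]
      intro h; linarith
    simp [h1]
  · have hsub : {y : E2 | 0 < s ∧ s < ‖y + a‖⁻¹} ⊆ ball (-a) s⁻¹ := by
      intro y hy
      have h2 := hy.2
      have hpos : 0 < ‖y + a‖ := by
        rcases (norm_nonneg (y + a)).eq_or_lt with h | h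
        · exfalso; rw [← h] at h2; simp at h2; linarith
        · exact h
      have hlt : ‖y + a‖ < s⁻¹ := (lt_inv_swap hs hpos).1 h2
      simpa [mem_ball, dist_eq_norm, sub_neg_eq_add] using hlt
    have hzero : {y : E2 | 0 < s ∧ s < ‖y + 0‖⁻¹} = ball (0:E2) s⁻¹ \ {0} := by
      ext y
      simp only [add_zero, Set.mem_setOf_eq, Set.mem_diff, mem_ball, dist_zero_right,
        Set.mem_singleton_iff]
      constructor
      · rintro ⟨h1, h2⟩
        have hy0 : y ≠ 0 := by
          rintro rfl; simp at h2; linarith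
        have hpos : 0 < ‖y‖ := norm_pos_iff.2 hy0
        exact ⟨(lt_inv_swap hs hpos).1 h2, hy0⟩
      · rintro ⟨h1, hy0⟩
        have hpos : 0 < ‖y‖ := norm_pos_iff.2 hy0
        exact ⟨hs, (lt_inv_swap hpos hs).1 h1⟩
    calc (∫⁻ y in {y : E2 | 0 < s ∧ s < ‖y + a‖⁻¹},
            ENNReal.ofReal (Real.exp (-‖y‖ ^ 2 / (4 * t))))
        ≤ ∫⁻ y in ball (-a) s⁻¹, ENNReal.ofReal (Real.exp (-‖y‖ ^ 2 / (4 * t))) :=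
          lintegral_mono_set hsub
      _ ≤ ∫⁻ y in ball (0:E2) s⁻¹, ENNReal.ofReal (Real.exp (-‖y‖ ^ 2 / (4 * t))) :=
          ball_shift t ht (-a) s⁻¹
      _ = ∫⁻ y in {y : E2 | 0 < s ∧ s < ‖y + 0‖⁻¹},
            ENNReal.ofReal (Real.exp (-‖y‖ ^ 2 / (4 * t))) := by
          rw [hzero]
          refine (setLIntegral_congr ?_).symm
          refine diff_null_ae_eq_self ?_
          simp

/-- Estimate (A.8) in the proof of Lemma A.3: for every `t > 0` and `a ∈ ℝ²`,
`∫ |y+a|⁻¹ exp(−|y|²/(4t)) dy ≤ √(4π³t)`, with equality when `a = 0`. -/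
theorem stmt14 (t : ℝ) (ht : 0 < t) (a : EuclideanSpace ℝ (Fin 2)) :
    (∫ y : EuclideanSpace ℝ (Fin 2), ‖y + a‖⁻¹ * Real.exp (-‖y‖ ^ 2 / (4 * t))) ≤
      Real.sqrt (4 * π ^ 3 * t) ∧
    (∫ y : EuclideanSpace ℝ (Fin 2), ‖y‖⁻¹ * Real.exp (-‖y‖ ^ 2 / (4 * t))) =
      Real.sqrt (4 * π ^ 3 * t) := by
  have heq := polar_eq t ht
  refine ⟨?_, heq⟩
  have hgm : Measurable fun y : E2 => Real.exp (-‖y‖ ^ 2 / (4 * t)) :=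
    (Real.continuous_exp.comp (by continuity)).measurable
  have hva : Measurable fun y : E2 => ‖y + a‖⁻¹ :=
    ((continuous_norm.comp (continuous_id.add continuous_const)).measurable).inv
  have hv0 : Measurable fun y : E2 => ‖y‖⁻¹ := continuous_norm.measurable.inv
  have int_a : (∫ y : E2, ‖y + a‖⁻¹ * Real.exp (-‖y‖ ^ 2 / (4 * t))) =
      (∫⁻ y : E2, ENNReal.ofReal (‖y + a‖⁻¹ * Real.exp (-‖y‖ ^ 2 / (4 * t)))).toReal := by
    refine integral_eq_lintegral_of_nonneg_ae ?_ (hva.mul hgm).aestronglyMeasurable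
    exact Filter.Eventually.of_forall fun y => by positivity
  have int_0 : (∫ y : E2, ‖y‖⁻¹ * Real.exp (-‖y‖ ^ 2 / (4 * t))) =
      (∫⁻ y : E2, ENNReal.ofReal (‖y‖⁻¹ * Real.exp (-‖y‖ ^ 2 / (4 * t)))).toReal := by
    refine integral_eq_lintegral_of_nonneg_ae ?_ (hv0.mul hgm).aestronglyMeasurable
    exact Filter.Eventually.of_forall fun y => by positivity
  have hL0 : (∫⁻ y : E2, ENNReal.ofReal (‖y + 0‖⁻¹ * Real.exp (-‖y‖ ^ 2 / (4 * t)))) =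
      ∫⁻ y : E2, ENNReal.ofReal (‖y‖⁻¹ * Real.exp (-‖y‖ ^ 2 / (4 * t))) :=
    lintegral_congr fun y => by rw [add_zero]
  have hsqrt_pos : 0 < Real.sqrt (4 * π ^ 3 * t) := by
    apply Real.sqrt_pos.2
    have := Real.pi_pos
    positivity
  have hne : (∫⁻ y : E2, ENNReal.ofReal (‖y‖⁻¹ * Real.exp (-‖y‖ ^ 2 / (4 * t)))) ≠ ⊤ := by
    intro h
    rw [heq, h] at int_0
    simp at int_0
    linarith
  have hmono := (L_mono t ht a).trans_eq hL0
  calc (∫ y : E2, ‖y + a‖⁻¹ * Real.exp (-‖y‖ ^ 2 / (4 * t)))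
      = (∫⁻ y : E2, ENNReal.ofReal (‖y + a‖⁻¹ * Real.exp (-‖y‖ ^ 2 / (4 * t)))).toReal := int_a
    _ ≤ (∫⁻ y : E2, ENNReal.ofReal (‖y‖⁻¹ * Real.exp (-‖y‖ ^ 2 / (4 * t)))).toReal :=
        ENNReal.toReal_mono hne hmono
    _ = Real.sqrt (4 * π ^ 3 * t) := by rw [← int_0, heq]
end
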